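/- If X = X₀ + S where S is a nondegenerate random variable symmetric about some point and independent of X₀, then the phase function of X equals the phase function of X₀ + c for the center of symmetry c of S, wherever φ_S is positive; in particular, the phase function does not determine X uniquely within the class of convolutions with symmetric distributions. -/

import Mathlib

open MeasureTheory ProbabilityTheory Complex

section Aux
variable {Ω : Type*} [MeasurableSpace Ω] {P : Measure Ω}

lemma indep_integral_mul_complex {f g : Ω → ℂ} (hf : Integrable f P) (hg : Integrable g P)
    (hfg : IndepFun f g P) :
    ∫ ω, f ω * g ω ∂P = (∫ ω, f ω ∂P) * (∫ ω, g ω ∂P) := by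
  have hfr : Integrable (fun ω => (RCLike.re (f ω) : ℝ)) P := hf.re
  have hfi : Integrable (fun ω => (RCLike.im (f ω) : ℝ)) P := hf.im
  have hgr : Integrable (fun ω => (RCLike.re (g ω) : ℝ)) P := hg.re
  have hgi : Integrable (fun ω => (RCLike.im (g ω) : ℝ)) P := hg.im
  have irr : IndepFun (fun ω => (RCLike.re (f ω) : ℝ)) (fun ω => (RCLike.re (g ω) : ℝ)) P :=
    hfg.comp Complex.measurable_re Complex.measurable_re
  have iri : IndepFun (fun ω => (RCLike.re (f ω) : ℝ)) (fun ω => (RCLike.im (g ω) : ℝ)) P :=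
    hfg.comp Complex.measurable_re Complex.measurable_im
  have iir : IndepFun (fun ω => (RCLike.im (f ω) : ℝ)) (fun ω => (RCLike.re (g ω) : ℝ)) P :=
    hfg.comp Complex.measurable_im Complex.measurable_re
  have iii : IndepFun (fun ω => (RCLike.im (f ω) : ℝ)) (fun ω => (RCLike.im (g ω) : ℝ)) P :=
    hfg.comp Complex.measurable_im Complex.measurable_im
  have hmul : Integrable (fun ω => f ω * g ω) P := hfg.integrable_mul hf hg
  apply Complex.ext <;> simp only [← RCLike.re_to_complex, ← RCLike.im_to_complex]
  · rw [← integral_re hmul, RCLike.mul_re, ← integral_re hf, ← integral_re hg,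
      ← integral_im hf, ← integral_im hg]
    simp_rw [RCLike.mul_re]
    have h1 : Integrable (fun x => RCLike.re (f x) * RCLike.re (g x)) P :=
      irr.integrable_mul hfr hgr
    have h2 : Integrable (fun x => RCLike.im (f x) * RCLike.im (g x)) P :=
      iii.integrable_mul hfi hgi
    rw [integral_sub h1 h2, irr.integral_fun_mul_eq_mul_integral hfr.1 hgr.1, iii.integral_fun_mul_eq_mul_integral hfi.1 hgi.1]
  · rw [← integral_im hmul, RCLike.mul_im, ← integral_re hf, ← integral_re hg,
      ← integral_im hf, ← integral_im hg]
    simp_rw [RCLike.mul_im]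
    have h1 : Integrable (fun x => RCLike.re (f x) * RCLike.im (g x)) P :=
      iri.integrable_mul hfr hgi
    have h2 : Integrable (fun x => RCLike.im (f x) * RCLike.re (g x)) P :=
      iir.integrable_mul hfi hgr
    rw [integral_add h1 h2, iri.integral_fun_mul_eq_mul_integral hfr.1 hgi.1, iir.integral_fun_mul_eq_mul_integral hfi.1 hgr.1]

lemma integrable_cexp [IsProbabilityMeasure P] (t : ℝ) {Y : Ω → ℝ} (hY : Measurable Y) :
    Integrable (fun ω => Complex.exp (Complex.I * t * Y ω)) P := by
  have hm : Measurable (fun ω => Complex.exp (Complex.I * t * Y ω)) :=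
    Complex.measurable_exp.comp ((measurable_const.mul (Complex.measurable_ofReal.comp hY)))
  refine (integrable_const (1 : ℝ)).mono' hm.aestronglyMeasurable (ae_of_all _ fun ω => ?_)
  have : ‖Complex.exp (Complex.I * t * Y ω)‖ = 1 := by
    rw [Complex.norm_exp]
    simp
  simp [this]

end Aux

/-- Characteristic function of a real random variable `X` under measure `P`. -/
noncomputable def charFun {Ω : Type*} [MeasurableSpace Ω] (P : Measure Ω)
    (X : Ω → ℝ) (t : ℝ) : ℂ :=
  ∫ ω, Complex.exp (Complex.I * t * X ω) ∂P

/-- If `X = X₀ + S` with `S` a nondegenerate random variable, symmetric about `c` and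
independent of `X₀`, then the phase function of `X` equals the phase function of `X₀ + c`
wherever the (real) characteristic function of `S - c` is positive.  In particular, the
phase function does not determine `X` uniquely among convolutions with symmetric laws. -/
theorem phase_function_symmetric_component {Ω : Type*} [MeasurableSpace Ω] (P : Measure Ω)
    [IsProbabilityMeasure P] (X X₀ S : Ω → ℝ) (c : ℝ)
    (hX₀ : Measurable X₀) (hS : Measurable S)
    (hXdef : ∀ ω, X ω = X₀ ω + S ω)
    (hindep : IndepFun X₀ S P)
    (hsymm : P.map (fun ω => S ω - c) = P.map (fun ω => -(S ω - c)))
    (hnondeg : ∀ x : ℝ, P.map S ≠ Measure.dirac x) :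
    ∀ t : ℝ, 0 < (charFun P (fun ω => S ω - c) t).re →
      charFun P X t / ((‖charFun P X t‖ : ℝ) : ℂ)
        = charFun P (fun ω => X₀ ω + c) t /
          ((‖charFun P (fun ω => X₀ ω + c) t‖ : ℝ) : ℂ) := by
  intro t hpos
  set ψ : ℂ := charFun P (fun ω => S ω - c) t with hψdef
  have hScm : Measurable (fun ω => S ω - c) := hS.sub measurable_const
  have hX₀cm : Measurable (fun ω => X₀ ω + c) := hX₀.add measurable_const
  -- key factorization
  have key : charFun P X t = charFun P (fun ω => X₀ ω + c) t * ψ := by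
    have heq : ∀ ω, Complex.exp (Complex.I * t * X ω)
        = Complex.exp (Complex.I * t * ((X₀ ω + c : ℝ) : ℂ))
          * Complex.exp (Complex.I * t * ((S ω - c : ℝ) : ℂ)) := by
      intro ω
      rw [← Complex.exp_add]
      congr 1
      rw [hXdef ω]
      push_cast
      ring
    have hfg : IndepFun (fun ω => Complex.exp (Complex.I * t * ((X₀ ω + c : ℝ) : ℂ)))
        (fun ω => Complex.exp (Complex.I * t * ((S ω - c : ℝ) : ℂ))) P := by
      have hm1 : Measurable (fun x : ℝ => Complex.exp (Complex.I * t * ((x + c : ℝ) : ℂ))) := by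
        fun_prop
      have hm2 : Measurable (fun x : ℝ => Complex.exp (Complex.I * t * ((x - c : ℝ) : ℂ))) := by
        fun_prop
      exact hindep.comp (φ := fun x : ℝ => Complex.exp (Complex.I * t * ((x + c : ℝ) : ℂ)))
        (ψ := fun x : ℝ => Complex.exp (Complex.I * t * ((x - c : ℝ) : ℂ))) hm1 hm2
    unfold _root_.charFun
    simp_rw [heq]
    exact indep_integral_mul_complex (integrable_cexp t hX₀cm) (integrable_cexp t hScm) hfg
  -- ψ is real
  have hconj : (starRingEnd ℂ) ψ = ψ := by
    rw [hψdef]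
    unfold _root_.charFun
    rw [← integral_conj]
    have hc : ∀ ω, (starRingEnd ℂ) (Complex.exp (Complex.I * t * ((S ω - c : ℝ) : ℂ)))
        = Complex.exp (Complex.I * t * ((-(S ω - c) : ℝ) : ℂ)) := by
      intro ω
      rw [← Complex.exp_conj]
      congr 1
      simp only [map_mul, Complex.conj_I, Complex.conj_ofReal]
      push_cast
      ring
    simp_rw [hc]
    have hae : AEStronglyMeasurable (fun x : ℝ => Complex.exp (Complex.I * t * x))
        (P.map (fun ω => -(S ω - c))) :=
      (Complex.measurable_exp.comp
        (measurable_const.mul Complex.measurable_ofReal)).aestronglyMeasurable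
    calc ∫ ω, Complex.exp (Complex.I * t * ((-(S ω - c) : ℝ) : ℂ)) ∂P
        = ∫ x, Complex.exp (Complex.I * t * x) ∂(P.map (fun ω => -(S ω - c))) :=
          (integral_map hScm.neg.aemeasurable hae).symm
      _ = ∫ x, Complex.exp (Complex.I * t * x) ∂(P.map (fun ω => S ω - c)) := by rw [← hsymm]
      _ = ∫ ω, Complex.exp (Complex.I * t * ((S ω - c : ℝ) : ℂ)) ∂P := by
          refine integral_map hScm.aemeasurable ?_
          exact (Complex.measurable_exp.comp
            (measurable_const.mul Complex.measurable_ofReal)).aestronglyMeasurable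
  have him : ψ.im = 0 := by
    have := congrArg Complex.im hconj
    simp only [Complex.conj_im] at this
    linarith
  have hψr : ψ = ((ψ.re : ℝ) : ℂ) := by
    apply Complex.ext <;> simp [him]
  -- conclude
  set A : ℂ := charFun P (fun ω => X₀ ω + c) t with hA
  rw [key, hψr]
  by_cases hA0 : A = 0
  case pos =>
    rw [hA0]
    simp
  case neg =>
    have habs : ‖A * ((ψ.re : ℝ) : ℂ)‖ = ‖A‖ * ψ.re := by
      rw [norm_mul, Complex.norm_real, Real.norm_eq_abs, abs_of_pos hpos]
    rw [habs]
    have hAabs : ‖A‖ ≠ 0 := by simpa using hA0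
    have hr : (ψ.re : ℂ) ≠ 0 := by exact_mod_cast ne_of_gt hpos
    have h1 : ((‖A‖ : ℝ) : ℂ) ≠ 0 := by exact_mod_cast hAabs
    push_cast
    rw [mul_div_mul_right _ _ hr]
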